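/- Let R be an unambiguous regex over Σ. If either ε ∈ L(R) or the languages L(R) and L(R*) overlap, then the star R* is infinitely ambiguous. (The ⟸ direction of the paper's Theorem 3(a), stated separately.) -/

import Mathlib

/-! Shared definitions: words, word power, parse trees of regular expressions,
(un)ambiguity, finite/infinite ambiguity, and the Brabrand–Thomsen overlap. -/

universe u

variable {α : Type u}

/-- `wpow w n` is the `n`-fold concatenation `w^n` of the word `w` with itself. -/
def wpow (w : List α) : ℕ → List α
  | 0 => []
  | n + 1 => w ++ wpow w n

/-- Parse trees of a regular expression for a word, defined inductively:
the regex `ε` has a unique parse tree for the empty word; the character regex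
for `a` has a unique parse tree for the word `[a]`; a parse tree of `R₁ + R₂`
(alternation) for `w` is a parse tree of `R₁` for `w` or a parse tree of `R₂`
for `w` (the two sides distinct); a parse tree of `R₁ * R₂` (concatenation)
for `w` is a decomposition `w = u ++ v` with parse trees of `R₁` for `u` and
of `R₂` for `v`; a parse tree of `R*` for `w` is a finite list of words
(possibly empty entries) concatenating to `w` with a parse tree of `R` for each. -/
inductive ParseTree : RegularExpression α → List α → Type u where
  | eps : ParseTree RegularExpression.epsilon []
  | char (a : α) : ParseTree (RegularExpression.char a) [a]
  | plusLeft {R₁ R₂ : RegularExpression α} {w : List α} :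
      ParseTree R₁ w → ParseTree (R₁ + R₂) w
  | plusRight {R₁ R₂ : RegularExpression α} {w : List α} :
      ParseTree R₂ w → ParseTree (R₁ + R₂) w
  | comp {R₁ R₂ : RegularExpression α} {u v : List α} :
      ParseTree R₁ u → ParseTree R₂ v → ParseTree (R₁ * R₂) (u ++ v)
  | starNil {R : RegularExpression α} : ParseTree R.star []
  | starCons {R : RegularExpression α} {u v : List α} :
      ParseTree R u → ParseTree R.star v → ParseTree R.star (u ++ v)

/-- A regex is unambiguous if every word has at most one parse tree of it. -/
def Unambiguous (R : RegularExpression α) : Prop :=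
  ∀ (w : List α) (t₁ t₂ : ParseTree R w), t₁ = t₂

/-- A regex is ambiguous if some word has two distinct parse trees of it. -/
def Ambiguous (R : RegularExpression α) : Prop :=
  ∃ (w : List α) (t₁ t₂ : ParseTree R w), t₁ ≠ t₂

/-- The word `w` has at least `k` distinct parse trees of `R`. -/
def HasAtLeastTrees (R : RegularExpression α) (w : List α) (k : ℕ) : Prop :=
  ∃ l : List (ParseTree R w), l.Nodup ∧ k ≤ l.length

/-- Every word has at most `k` parse trees of `R`. -/
def BoundedBy (R : RegularExpression α) (k : ℕ) : Prop :=
  ∀ (w : List α) (l : List (ParseTree R w)), l.Nodup → l.length ≤ k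

/-- `R` is finitely ambiguous: ambiguous, with a uniform bound on the number
of parse trees of any word. -/
def FinitelyAmbiguous (R : RegularExpression α) : Prop :=
  Ambiguous R ∧ ∃ k : ℕ, BoundedBy R k

/-- `R` is infinitely ambiguous: for every `k` some word has more than `k`
parse trees of `R`. -/
def InfinitelyAmbiguous (R : RegularExpression α) : Prop :=
  ∀ k : ℕ, ∃ w : List α, HasAtLeastTrees R w (k + 1)

/-- Languages `L₁` and `L₂` overlap (nonemptiness of the Brabrand–Thomsen
overlap operator): there are words `x`, `y` and a nonempty word `a` with
`x ∈ L₁`, `x ++ a ∈ L₁`, `a ++ y ∈ L₂`, and `y ∈ L₂`. -/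
def Overlaps (L₁ L₂ : Language α) : Prop :=
  ∃ x y a : List α, a ≠ [] ∧ x ∈ L₁ ∧ x ++ a ∈ L₁ ∧ a ++ y ∈ L₂ ∧ y ∈ L₂

namespace Stmt18Aux

/-- Existence of a parse tree from membership. -/
theorem exists_tree : ∀ (R : RegularExpression α) {w : List α},
    w ∈ R.matches' → Nonempty (ParseTree R w) := by
  intro R
  induction R with
  | zero => intro w hw; simp [RegularExpression.matches'] at hw
  | epsilon =>
      intro w hw
      simp [RegularExpression.matches'] at hw
      subst hw; exact ⟨.eps⟩
  | char a =>
      intro w hw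
      simp [RegularExpression.matches'] at hw
      subst hw; exact ⟨.char a⟩
  | plus R₁ R₂ ih₁ ih₂ =>
      intro w hw
      rcases hw with hw | hw
      · exact ⟨.plusLeft (ih₁ hw).some⟩
      · exact ⟨.plusRight (ih₂ hw).some⟩
  | comp R₁ R₂ ih₁ ih₂ =>
      intro w hw
      rcases hw with ⟨u, hu, v, hv, rfl⟩
      exact ⟨.comp (ih₁ hu).some (ih₂ hv).some⟩
  | star R ih =>
      intro w hw
      rw [RegularExpression.matches'_star, Language.mem_kstar] at hw
      obtain ⟨L, rfl, hL⟩ := hw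
      induction L with
      | nil => exact ⟨.starNil⟩
      | cons u L ihL =>
          have h1 := ih (hL u (by simp))
          have h2 := ihL (fun y hy => hL y (by simp [hy]))
          exact ⟨.starCons h1.some h2.some⟩

/-- Concatenation of star parse trees. -/
def sapp {R : RegularExpression α} : {u v : List α} → ParseTree R.star u →
    ParseTree R.star v → ParseTree R.star (u ++ v)
  | _, _, .starNil, s => s
  | _, _, .starCons t s', s =>
      (List.append_assoc _ _ _).symm ▸ ParseTree.starCons t (sapp s' s)

/-- The list of pieces of a star parse tree. -/
def pieces {R : RegularExpression α} : {w : List α} → ParseTree R.star w → List (List α)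
  | _, .starNil => []
  | _, .starCons (u := u) _ s => u :: pieces s

theorem pieces_cast {R : RegularExpression α} {u v : List α} (h : u = v)
    (t : ParseTree R.star u) : pieces (h ▸ t) = pieces t := by subst h; rfl

theorem pieces_sapp {R : RegularExpression α} : ∀ {u v : List α}
    (s : ParseTree R.star u) (t : ParseTree R.star v),
    pieces (sapp s t) = pieces s ++ pieces t
  | _, _, .starNil, t => by rw [sapp, pieces]; rfl
  | _, _, .starCons a s', t => by
      rw [sapp, pieces_cast, pieces, pieces_sapp s' t, pieces]; rfl

/-- Repeated star parse tree for `w^n`. -/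
def rep {R : RegularExpression α} {w : List α} (t : ParseTree R.star w) :
    (n : ℕ) → ParseTree R.star (wpow w n)
  | 0 => .starNil
  | n + 1 => sapp t (rep t n)

theorem pieces_rep {R : RegularExpression α} {w : List α} (t : ParseTree R.star w) :
    ∀ n : ℕ, pieces (rep t n) = (List.replicate n (pieces t)).flatten
  | 0 => by show pieces (ParseTree.starNil (R := R)) = _; rw [pieces]; rfl
  | n + 1 => by
      have hr : pieces (rep t (n + 1)) = pieces (sapp t (rep t n)) := rfl
      rw [hr, pieces_sapp, pieces_rep t n]
      simp [List.replicate_succ]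

theorem wpow_add (w : List α) (m n : ℕ) : wpow w (m + n) = wpow w m ++ wpow w n := by
  induction m with
  | zero => simp [wpow]
  | succ m ih => rw [Nat.succ_add]; simp [wpow, ih]

theorem wpow_nil (n : ℕ) : wpow ([] : List α) n = [] := by
  induction n with
  | zero => rfl
  | succ n ih => simp [wpow, ih]

/-- Key injectivity lemma for the overlap case. -/
theorem key {x xa : List α} (hne : xa ≠ x) (pb pa : List (List α)) :
    ∀ (i j m m' : ℕ),
      (List.replicate i (x :: pb)).flatten ++ (List.replicate m (xa :: pa)).flatten =
      (List.replicate j (x :: pb)).flatten ++ (List.replicate m' (xa :: pa)).flatten →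
      i = j
  | 0, 0, _, _, _ => rfl
  | 0, j + 1, m, m', h => by
      cases m with
      | zero => simp [List.replicate_succ] at h
      | succ q =>
          simp only [List.replicate_succ, List.flatten_cons, List.cons_append,
            List.append_assoc] at h
          exact absurd (List.cons.inj h).1 hne
  | i + 1, 0, m, m', h => by
      cases m' with
      | zero => simp [List.replicate_succ] at h
      | succ q =>
          simp only [List.replicate_succ, List.flatten_cons, List.cons_append,
            List.append_assoc] at h
          exact absurd (List.cons.inj h).1 (fun e => hne e.symm)
  | i + 1, j + 1, m, m', h => by
      simp only [List.replicate_succ, List.flatten_cons, List.append_assoc] at h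
      have := List.append_cancel_left h
      exact congrArg Nat.succ (key hne pb pa i j m m' this)

end Stmt18Aux

/-- ⟸ direction of Theorem 3(a): for unambiguous `R`, if `ε ∈ L(R)` or
`L(R)` and `L(R*)` overlap, then `R*` is infinitely ambiguous. -/
theorem stmt_18 {α : Type u} (R : RegularExpression α) (h : Unambiguous R)
    (hcond : [] ∈ R.matches' ∨ Overlaps R.matches' R.star.matches') :
    InfinitelyAmbiguous R.star := by
  clear h
  open Stmt18Aux in
  rcases hcond with h0 | ⟨x, y, a, ha, hx, hxa, hay, hy⟩
  · -- case ε ∈ L(R)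
    obtain ⟨t⟩ := exists_tree R h0
    intro k
    obtain ⟨s0, hs0⟩ : ∃ t0 : ParseTree R.star ([] : List α), pieces t0 = [([] : List α)] :=
      ⟨ParseTree.starCons t ParseTree.starNil, by rw [pieces, pieces]⟩
    refine ⟨[], (List.range (k + 1)).map (fun i => (wpow_nil i) ▸ rep s0 i), ?_, by simp⟩
    refine List.Nodup.map_on ?_ List.nodup_range
    intro i _ j _ hij
    have := congrArg pieces hij
    rw [pieces_cast, pieces_cast, pieces_rep, pieces_rep, hs0] at this
    have hlen := congrArg List.length this
    simpa using hlen
  · -- overlap case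
    obtain ⟨tx⟩ := exists_tree R hx
    obtain ⟨txa⟩ := exists_tree R hxa
    obtain ⟨say⟩ := exists_tree R.star hay
    obtain ⟨sy⟩ := exists_tree R.star hy
    set w : List α := x ++ (a ++ y) with hw
    have hA : (x ++ a) ++ y = w := List.append_assoc x a y
    obtain ⟨tb, hpb⟩ : ∃ t0 : ParseTree R.star w, pieces t0 = x :: pieces say :=
      ⟨ParseTree.starCons tx say, by rw [pieces]⟩
    obtain ⟨ta, hpa⟩ : ∃ t0 : ParseTree R.star w, pieces t0 = (x ++ a) :: pieces sy :=
      ⟨hA ▸ ParseTree.starCons txa sy, by rw [pieces_cast, pieces]⟩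
    intro k
    have heq : ∀ i : ℕ, i ≤ k → wpow w i ++ wpow w (k - i) = wpow w k := by
      intro i hi
      rw [← wpow_add, Nat.add_sub_cancel' hi]
    refine ⟨wpow w k, (List.range (k + 1)).map (fun i =>
      if h : i ≤ k then (heq i h) ▸ sapp (rep tb i) (rep ta (k - i)) else rep ta k),
      ?_, by simp⟩
    refine List.Nodup.map_on ?_ List.nodup_range
    intro i hi j hj hij
    rw [List.mem_range, Nat.lt_succ_iff] at hi hj
    rw [dif_pos hi, dif_pos hj] at hij
    have hp := congrArg pieces hij
    rw [pieces_cast, pieces_cast, pieces_sapp, pieces_sapp,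
      pieces_rep, pieces_rep, pieces_rep, pieces_rep, hpa, hpb] at hp
    have hne : x ++ a ≠ x := by
      intro e
      have := congrArg List.length e
      simp at this
      exact ha this
    exact key hne (pieces say) (pieces sy) i j (k - i) (k - j) hp
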